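/- arXiv:math/0102135 — 3 statements merged into one kernel-verified Lean document; each statement's English description precedes it below -/
import Mathlib

section
/- SD({0, 1, 2, ∞}, 7/4) holds. Explicitly: there exists a constant C such that for every real vector space Z and every finite set G ⊆ Z × Z on which the map (a,b) ↦ a − b is injective, one has #G ≤ C · N^{7/4}, where N := max{ #{a : (a,b) ∈ G}, #{a + b : (a,b) ∈ G}, #{a + 2b : (a,b) ∈ G}, #{b : (a,b) ∈ G} }. -/
open Finset

/-- Cauchy–Schwarz for fibers: the square of the cardinality of `s` is at most the number of
possible values of `f` times the number of pairs of elements of `s` where `f` agrees. -/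
lemma sq_card_le_card_mul_card_pairs {α β : Type*} [DecidableEq β]
    (s : Finset α) (f : α → β) (T : Finset β) (hT : ∀ a ∈ s, f a ∈ T) :
    s.card ^ 2 ≤ #T * #((s ×ˢ s).filter fun q => f q.1 = f q.2) := by
  classical
  have h1 : #s = ∑ b ∈ T, #(s.filter fun a => f a = b) :=
    card_eq_sum_card_fiberwise hT
  have h2 : #((s ×ˢ s).filter fun q => f q.1 = f q.2)
      = ∑ b ∈ T, #(s.filter fun a => f a = b) ^ 2 := by
    rw [card_eq_sum_card_fiberwise (f := fun q : α × α => f q.1) (t := T)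
      (fun q hq => by
        rw [Finset.mem_coe, mem_filter, mem_product] at hq
        exact hT _ hq.1.1)]
    refine Finset.sum_congr rfl fun b _ => ?_
    have hset : ((s ×ˢ s).filter fun q => f q.1 = f q.2).filter
        (fun q : α × α => f q.1 = b)
        = (s.filter fun a => f a = b) ×ˢ (s.filter fun a => f a = b) := by
      ext ⟨x, y⟩
      simp only [mem_filter, mem_product, filter_filter]
      constructor
      · rintro ⟨⟨hx, hy⟩, hxy, hxb⟩
        exact ⟨⟨hx, hxb⟩, hy, hxy ▸ hxb⟩
      · rintro ⟨⟨hx, hxb⟩, hy, hyb⟩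
        exact ⟨⟨hx, hy⟩, hxb.trans hyb.symm, hxb⟩
    rw [hset, card_product, sq]
  calc #s ^ 2 = (∑ b ∈ T, #(s.filter fun a => f a = b)) ^ 2 := by rw [h1]
    _ ≤ #T * ∑ b ∈ T, #(s.filter fun a => f a = b) ^ 2 := sq_sum_le_card_mul_sum_sq
    _ = #T * #((s ×ˢ s).filter fun q => f q.1 = f q.2) := by rw [h2]

/-- `SD({0,1,2,∞}, 7/4)`: if `(a,b) ↦ a - b` is injective on a finite set `G ⊆ Z × Z`,
then `#G ≲ N^{7/4}` where `N` is the largest of the cardinalities of the images of `G`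
under `(a,b) ↦ a`, `(a,b) ↦ a + b`, `(a,b) ↦ a + 2b` and `(a,b) ↦ b`. -/
theorem SD_zero_one_two_infty :
    ∃ C : ℝ, ∀ (Z : Type) [AddCommGroup Z] [Module ℝ Z],
      ∀ G : Set (Z × Z), G.Finite →
        Set.InjOn (fun g : Z × Z => g.1 - g.2) G →
        (G.ncard : ℝ) ≤ C *
          ((max (max ((Prod.fst '' G).ncard) (((fun g : Z × Z => g.1 + g.2) '' G).ncard))
            (max (((fun g : Z × Z => g.1 + (2 : ℝ) • g.2) '' G).ncard)
              ((Prod.snd '' G).ncard)) : ℕ) : ℝ) ^ ((7 : ℝ) / 4) := by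
  classical
  refine ⟨1, ?_⟩
  intro Z _ _ G hfin hinj
  set π1 : Z × Z → Z := fun g : Z × Z => g.1 + g.2 with hπ1def
  set π2 : Z × Z → Z := fun g : Z × Z => g.1 + (2 : ℝ) • g.2 with hπ2def
  set F : Finset (Z × Z) := hfin.toFinset with hFdef
  have hFG : (↑F : Set (Z × Z)) = G := hfin.coe_toFinset
  have hmemF : ∀ p : Z × Z, p ∈ F → p ∈ G := fun p hp => hfin.mem_toFinset.1 hp
  set Nn : ℕ := max (max ((Prod.fst '' G).ncard) ((π1 '' G).ncard))
      (max ((π2 '' G).ncard) ((Prod.snd '' G).ncard)) with hNdef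
  have himg : ∀ f : Z × Z → Z, (f '' G).ncard = #(F.image f) := by
    intro f
    rw [← hFG, ← Finset.coe_image, Set.ncard_coe_finset]
  have hA : #(F.image Prod.fst) ≤ Nn := by
    rw [← himg]; exact le_trans (le_max_left _ _) (le_max_left _ _)
  have hS : #(F.image π1) ≤ Nn := by
    rw [← himg]; exact le_trans (le_max_right _ _) (le_max_left _ _)
  have hT2 : #(F.image π2) ≤ Nn := by
    rw [← himg]; exact le_trans (le_max_left _ _) (le_max_right _ _)
  have hB : #(F.image Prod.snd) ≤ Nn := by
    rw [← himg]; exact le_trans (le_max_right _ _) (le_max_right _ _)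
  -- the set of π1-matched pairs
  set P : Finset ((Z × Z) × (Z × Z)) := (F ×ˢ F).filter (fun q => π1 q.1 = π1 q.2) with hPdef
  -- Step 1 : #F ^ 2 ≤ Nn * #P
  have step1 : #F ^ 2 ≤ Nn * #P := by
    refine le_trans (sq_card_le_card_mul_card_pairs F π1 (F.image π1)
      (fun a ha => mem_image_of_mem _ ha)) ?_
    exact Nat.mul_le_mul_right _ hS
  -- cell map for second Cauchy-Schwarz
  set fcell : (Z × Z) × (Z × Z) → Z × Z := fun q => (q.1.1, q.2.1) with hfcell
  set U : Finset (((Z × Z) × (Z × Z)) × ((Z × Z) × (Z × Z))) :=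
    (P ×ˢ P).filter (fun w => fcell w.1 = fcell w.2) with hUdef
  -- Step 2 : #P ^ 2 ≤ (Nn * Nn) * #U
  have step2 : #P ^ 2 ≤ (Nn * Nn) * #U := by
    refine le_trans (sq_card_le_card_mul_card_pairs P fcell
      ((F.image Prod.fst) ×ˢ (F.image Prod.fst)) ?_) ?_
    · intro q hq
      rw [hPdef, mem_filter, mem_product] at hq
      have hcq : fcell q = (q.1.1, q.2.1) := rfl
      rw [hcq]
      simp only [mem_product]
      exact ⟨mem_image_of_mem _ hq.1.1, mem_image_of_mem _ hq.1.2⟩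
    · refine Nat.mul_le_mul_right _ ?_
      rw [card_product]
      exact Nat.mul_le_mul hA hA
  -- Step 3 : #U ≤ Nn ^ 3, via an injection using injectivity of the difference map
  have step3 : #U ≤ Nn ^ 3 := by
    have hmemU : ∀ w, w ∈ U →
        (w.1.1 ∈ G ∧ w.1.2 ∈ G ∧ w.2.1 ∈ G ∧ w.2.2 ∈ G) ∧
        (π1 w.1.1 = π1 w.1.2 ∧ π1 w.2.1 = π1 w.2.2) ∧
        (w.1.1.1 = w.2.1.1 ∧ w.1.2.1 = w.2.2.1) := by
      intro w hw
      rw [hUdef, mem_filter, mem_product] at hw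
      obtain ⟨⟨h1, h2⟩, h3⟩ := hw
      rw [hPdef, mem_filter, mem_product] at h1 h2
      have h3' : (w.1.1.1, w.1.2.1) = (w.2.1.1, w.2.2.1) := h3
      rw [Prod.mk.injEq] at h3'
      exact ⟨⟨hmemF _ h1.1.1, hmemF _ h1.1.2, hmemF _ h2.1.1, hmemF _ h2.1.2⟩,
        ⟨h1.2, h2.2⟩, h3'⟩
    -- key algebraic identity on configurations
    have hkey : ∀ w, w ∈ U →
        w.1.1.1 - w.1.1.2 = π2 w.2.2 - w.1.2.2 - (2 : ℝ) • w.2.1.2 := by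
      intro w hw
      obtain ⟨_, ⟨e1, e2⟩, e3, e4⟩ := hmemU w hw
      have t1 : w.1.1.1 + w.1.1.2 = w.1.2.1 + w.1.2.2 := e1
      have t2 : w.2.1.1 + w.2.1.2 = w.2.2.1 + w.2.2.2 := e2
      have hp2 : π2 w.2.2 = w.2.2.1 + ((2 : ℝ) • w.2.2.2) := rfl
      rw [hp2, two_smul, two_smul]
      -- from t2, e3, e4 : w.2.2.2 = w.1.1.1 + w.2.1.2 - w.1.2.1
      have h32 : w.2.2.2 = w.1.1.1 + w.2.1.2 - w.1.2.1 := by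
        have : w.2.2.2 = w.2.1.1 + w.2.1.2 - w.2.2.1 := by rw [t2]; abel
        rw [this, ← e3, ← e4]
      -- from t1 : w.1.2.1 = w.1.1.1 + w.1.1.2 - w.1.2.2
      have h11 : w.1.2.1 = w.1.1.1 + w.1.1.2 - w.1.2.2 := by rw [eq_sub_iff_add_eq]; rw [← t1]
      rw [← e4, h32, h11]
      abel
    refine le_trans (card_le_card_of_injOn
      (fun w => (w.1.2.2, (w.2.1.2, π2 w.2.2)))
      (t := (F.image Prod.snd) ×ˢ ((F.image Prod.snd) ×ˢ (F.image π2))) ?_ ?_) ?_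
    · intro w hw
      rw [hUdef, Finset.mem_coe, mem_filter, mem_product] at hw
      obtain ⟨⟨h1, h2⟩, _⟩ := hw
      rw [hPdef, mem_filter, mem_product] at h1 h2
      exact mem_product.2 ⟨mem_image_of_mem _ h1.1.2,
        mem_product.2 ⟨mem_image_of_mem _ h2.1.1, mem_image_of_mem _ h2.1.2⟩⟩
    · intro w hw w' hw' heq
      rw [Finset.mem_coe] at hw hw'
      rw [Prod.mk.injEq, Prod.mk.injEq] at heq
      obtain ⟨hv1, hv2, hv3⟩ := heq
      obtain ⟨⟨g1, g2, g3, g4⟩, ⟨e1, e2⟩, e3, e4⟩ := hmemU w hw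
      obtain ⟨⟨g1', g2', g3', g4'⟩, ⟨e1', e2'⟩, e3', e4'⟩ := hmemU w' hw'
      -- differences of the first points agree
      have hd : w.1.1.1 - w.1.1.2 = w'.1.1.1 - w'.1.1.2 := by
        rw [hkey w hw, hkey w' hw', hv1, hv2, hv3]
      have hp0 : w.1.1 = w'.1.1 := hinj g1 g1' hd
      have hx0 : w.1.1.1 = w'.1.1.1 := by rw [hp0]
      have hy0 : w.1.1.2 = w'.1.1.2 := by rw [hp0]
      -- first point of the second pair of w.1 : w.1.2
      have t1 : w.1.1.1 + w.1.1.2 = w.1.2.1 + w.1.2.2 := e1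
      have t1' : w'.1.1.1 + w'.1.1.2 = w'.1.2.1 + w'.1.2.2 := e1'
      have h11 : w.1.2.1 = w.1.1.1 + w.1.1.2 - w.1.2.2 := by rw [t1]; abel
      have h11' : w'.1.2.1 = w'.1.1.1 + w'.1.1.2 - w'.1.2.2 := by rw [t1']; abel
      have hx1 : w.1.2.1 = w'.1.2.1 := by rw [h11, h11', hx0, hy0, hv1]
      have hp1 : w.1.2 = w'.1.2 := Prod.ext hx1 hv1
      -- second corner w.2.1
      have hp2 : w.2.1 = w'.2.1 := by
        refine Prod.ext ?_ hv2
        rw [← e3, ← e3', hx0]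
      -- last corner w.2.2
      have hx3 : w.2.2.1 = w'.2.2.1 := by rw [← e4, ← e4', hx1]
      have t2 : w.2.1.1 + w.2.1.2 = w.2.2.1 + w.2.2.2 := e2
      have t2' : w'.2.1.1 + w'.2.1.2 = w'.2.2.1 + w'.2.2.2 := e2'
      have h32 : w.2.2.2 = w.1.1.1 + w.2.1.2 - w.1.2.1 := by
        have ht : w.2.2.2 = w.2.1.1 + w.2.1.2 - w.2.2.1 := by rw [t2]; abel
        rw [ht, ← e3, ← e4]
      have h32' : w'.2.2.2 = w'.1.1.1 + w'.2.1.2 - w'.1.2.1 := by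
        have ht : w'.2.2.2 = w'.2.1.1 + w'.2.1.2 - w'.2.2.1 := by rw [t2']; abel
        rw [ht, ← e3', ← e4']
      have hy3 : w.2.2.2 = w'.2.2.2 := by rw [h32, h32', hx0, hv2, hx1]
      have hp3 : w.2.2 = w'.2.2 := Prod.ext hx3 hy3
      exact Prod.ext (Prod.ext hp0 hp1) (Prod.ext hp2 hp3)
    · rw [card_product, card_product]
      calc #(F.image Prod.snd) * (#(F.image Prod.snd) * #(F.image π2))
          ≤ Nn * (Nn * Nn) := by
            exact Nat.mul_le_mul hB (Nat.mul_le_mul hB hT2)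
        _ = Nn ^ 3 := by ring
  -- combine: #F ^ 4 ≤ Nn ^ 7
  have hnat : #F ^ 4 ≤ Nn ^ 7 := by
    calc #F ^ 4 = (#F ^ 2) ^ 2 := by ring
      _ ≤ (Nn * #P) ^ 2 := Nat.pow_le_pow_left step1 2
      _ = Nn ^ 2 * #P ^ 2 := by ring
      _ ≤ Nn ^ 2 * ((Nn * Nn) * #U) := Nat.mul_le_mul_left _ step2
      _ ≤ Nn ^ 2 * ((Nn * Nn) * Nn ^ 3) := by
          exact Nat.mul_le_mul_left _ (Nat.mul_le_mul_left _ step3)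
      _ = Nn ^ 7 := by ring
  -- pass to the reals
  have hKG : G.ncard = #F := by rw [← hFG, Set.ncard_coe_finset]
  rw [hKG, one_mul]
  have hreal : ((#F : ℝ)) ^ (4 : ℕ) ≤ ((Nn : ℝ)) ^ (7 : ℕ) := by
    exact_mod_cast hnat
  have hFnn : (0 : ℝ) ≤ (#F : ℝ) := Nat.cast_nonneg _
  have hNnn : (0 : ℝ) ≤ (Nn : ℝ) := Nat.cast_nonneg _
  have h14 : (0 : ℝ) ≤ (1 : ℝ) / 4 := by norm_num
  have hmono := Real.rpow_le_rpow (by positivity) hreal h14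
  calc (#F : ℝ) = (((#F : ℝ)) ^ (4 : ℕ)) ^ ((1 : ℝ) / 4) := by
        rw [← Real.rpow_natCast (#F : ℝ) 4, ← Real.rpow_mul hFnn]
        norm_num
    _ ≤ (((Nn : ℝ)) ^ (7 : ℕ)) ^ ((1 : ℝ) / 4) := hmono
    _ = (Nn : ℝ) ^ ((7 : ℝ) / 4) := by
        rw [← Real.rpow_natCast (Nn : ℝ) 7, ← Real.rpow_mul hNnn]
        norm_num
end

section
/- Let r₀, r_∞ be distinct proper slopes and let s ≠ 0 be a real number. Let r₁, r₂ be proper slopes, not equal to r₀ or r_∞, admitting dual slopes r₁′, r₂′ with respect to r₀, r_∞ and s, such that the seven slopes r₁, r₂, r₁′, r₂′, −1, r₀, r_∞ are pairwise distinct. Then SD({r₀, r₁, r₁′, r₂, r₂′, r_∞}, 7/4) holds. -/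
/-- The projection `π_r : Z × Z → Z` associated to a slope `r ∈ ℝ ∪ {∞}`
(`none` denotes the slope `∞`): `π_r(a,b) = a + r • b` and `π_∞(a,b) = b`. -/
noncomputable def piSlope {Z : Type*} [AddCommGroup Z] [Module ℝ Z]
    (r : Option ℝ) (g : Z × Z) : Z :=
  match r with
  | none => g.2
  | some c => g.1 + c • g.2

/-- `SDR R α`: there is a constant `C` such that for every real vector space `Z` and every
finite `G ⊆ Z × Z` on which `π_{-1}(a,b) = a - b` is injective, one has
`#G ≤ C·(max_{r ∈ R} #(π_r(G)))^α`. -/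
def SDR (R : Finset (Option ℝ)) (α : ℝ) : Prop :=
  ∃ C : ℝ, ∀ (Z : Type) [AddCommGroup Z] [Module ℝ Z],
    ∀ G : Set (Z × Z), G.Finite →
      Set.InjOn (piSlope (some (-1))) G →
      (G.ncard : ℝ) ≤ C * ((R.sup fun r => (piSlope r '' G).ncard : ℕ) : ℝ) ^ α

/-- `SDprop α`: for every `ε > 0` there is a finite set `R` of proper slopes
(slopes different from `-1`) with `SDR R (α + ε)`. -/
def SDprop (α : ℝ) : Prop :=
  ∀ ε : ℝ, 0 < ε →
    ∃ R : Finset (Option ℝ), (∀ r ∈ R, r ≠ some (-1)) ∧ SDR R (α + ε)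

/-- `r'` is the dual slope of `r` with respect to `r₀`, `r_∞` and `s`. -/
def IsDualSlope (r0 rinf : Option ℝ) (s : ℝ) (r r' : Option ℝ) : Prop :=
  ∃ x y z : ℝ, x ≠ 0 ∧ y ≠ 0 ∧
    ∀ (Z : Type) [AddCommGroup Z] [Module ℝ Z], ∀ g g' : Z × Z,
      s • piSlope rinf g + piSlope (some (-1)) g' =
        x • piSlope r g + y • piSlope r' g' + z • (piSlope r0 g - piSlope r0 g')

section helpers
variable {Z : Type*} [AddCommGroup Z] [Module ℝ Z]

lemma piSlope_some (c : ℝ) (g : Z × Z) : piSlope (some c) g = g.1 + c • g.2 := rfl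
lemma piSlope_none (g : Z × Z) : piSlope (none : Option ℝ) g = g.2 := rfl

lemma piSlope_inj2 {r r' : Option ℝ} (h : r ≠ r') {z w : Z × Z}
    (e1 : piSlope r z = piSlope r w) (e2 : piSlope r' z = piSlope r' w) : z = w := by
  cases r with
  | none =>
    cases r' with
    | none => exact absurd rfl h
    | some c' =>
      rw [piSlope_none] at e1
      rw [piSlope_some, piSlope_some, e1] at e2
      exact Prod.ext (add_right_cancel e2) e1
  | some c =>
    cases r' with
    | none =>
      rw [piSlope_none] at e2
      rw [piSlope_some, piSlope_some, e2] at e1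
      exact Prod.ext (add_right_cancel e1) e2
    | some c' =>
      have hcc : c ≠ c' := fun hc => h (by rw [hc])
      rw [piSlope_some, piSlope_some] at e1 e2
      have h3 : c • z.2 - c' • z.2 = c • w.2 - c' • w.2 := by
        have h4 := congrArg₂ (fun u v => u - v) e1 e2
        simpa [add_sub_add_left_eq_sub] using h4
      have h5 : (c - c') • z.2 = (c - c') • w.2 := by
        rw [sub_smul, sub_smul]; exact h3
      have h6 : z.2 = w.2 := by
        have h7 := congrArg (fun u => (c - c')⁻¹ • u) h5
        simpa [inv_smul_smul₀ (sub_ne_zero.mpr hcc)] using h7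
      rw [h6] at e1
      exact Prod.ext (add_right_cancel e1) h6

end helpers

/-- Theorem (flexible six-slice sums-differences estimate):
if `r₀, r_∞` are distinct proper slopes, `s ≠ 0`, and `r₁, r₂` are proper slopes
different from `r₀, r_∞` admitting dual slopes `r₁′, r₂′` such that
`r₁, r₂, r₁′, r₂′, -1, r₀, r_∞` are pairwise distinct, then
`SD({r₀, r₁, r₁′, r₂, r₂′, r_∞}, 7/4)` holds. -/
theorem SDR_six_slices (r0 rinf r1 r2 r1' r2' : Option ℝ) (s : ℝ) (hs : s ≠ 0)
    (h0 : r0 ≠ some (-1)) (hinf : rinf ≠ some (-1)) (h0inf : r0 ≠ rinf)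
    (h1p : r1 ≠ some (-1)) (h2p : r2 ≠ some (-1))
    (h10 : r1 ≠ r0) (h1inf : r1 ≠ rinf) (h20 : r2 ≠ r0) (h2inf : r2 ≠ rinf)
    (hd1 : IsDualSlope r0 rinf s r1 r1') (hd2 : IsDualSlope r0 rinf s r2 r2')
    (hdist : [r1, r2, r1', r2', some (-1), r0, rinf].Pairwise (· ≠ ·)) :
    SDR {r0, r1, r1', r2, r2', rinf} (7 / 4) := by
  obtain ⟨x1, y1, z1, hx1, hy1, hid1⟩ := hd1
  obtain ⟨x2, y2, z2, hx2, hy2, hid2⟩ := hd2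
  have h12 : r1 ≠ r2 := by
    simp only [List.pairwise_cons, List.mem_cons] at hdist
    exact hdist.1 r2 (by simp)
  refine ⟨1, ?_⟩
  intro Z _ _ G hGfin hinj
  classical
  rw [one_mul]
  set M : ℕ := Finset.sup {r0, r1, r1', r2, r2', rinf}
      (fun r => (piSlope r '' G).ncard) with hM
  set Gf : Finset (Z × Z) := hGfin.toFinset with hGfdef
  have hGcoe : (Gf : Set (Z × Z)) = G := hGfin.coe_toFinset
  have hK : G.ncard = Gf.card := by rw [← hGcoe, Set.ncard_coe_finset]
  have hmemG : ∀ g : Z × Z, g ∈ Gf → g ∈ G := by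
    intro g hg; rw [← hGcoe]; exact hg
  have him : ∀ r ∈ ({r0, r1, r1', r2, r2', rinf} : Finset (Option ℝ)),
      (Gf.image (piSlope r)).card ≤ M := by
    intro r hr
    have h1 : ((Gf.image (piSlope r)) : Set Z) = piSlope r '' G := by
      rw [Finset.coe_image, hGcoe]
    have h2 : (Gf.image (piSlope r)).card = (piSlope r '' G).ncard := by
      rw [← h1, Set.ncard_coe_finset]
    rw [h2, hM]
    exact Finset.le_sup (f := fun r => (piSlope r '' G).ncard) hr
  -- the pair set
  set P : Finset ((Z × Z) × (Z × Z)) :=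
    (Gf ×ˢ Gf).filter (fun p => piSlope r0 p.1 = piSlope r0 p.2) with hPdef
  have hmemP : ∀ p : (Z × Z) × (Z × Z), p ∈ P ↔
      (p.1 ∈ Gf ∧ p.2 ∈ Gf ∧ piSlope r0 p.1 = piSlope r0 p.2) := by
    intro p
    simp [hPdef, Finset.mem_filter, Finset.mem_product, and_assoc]
  set vf : (Z × Z) × (Z × Z) → Z :=
    fun p => s • piSlope rinf p.1 + piSlope (some (-1)) p.2 with hvf
  -- dual identities on P
  have hident1 : ∀ p ∈ P, vf p = x1 • piSlope r1 p.1 + y1 • piSlope r1' p.2 := by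
    intro p hp
    have h := hid1 Z p.1 p.2
    rw [(hmemP p).1 hp |>.2.2] at h
    simpa [hvf] using h
  have hident2 : ∀ p ∈ P, vf p = x2 • piSlope r2 p.1 + y2 • piSlope r2' p.2 := by
    intro p hp
    have h := hid2 Z p.1 p.2
    rw [(hmemP p).1 hp |>.2.2] at h
    simpa [hvf] using h
  -- Step A : K^2 ≤ M * P.card
  set A : Finset Z := Gf.image (piSlope r0) with hAdef
  set fib : Z → Finset (Z × Z) := fun a => Gf.filter (fun g => piSlope r0 g = a) with hfib
  have hA : Gf.card = ∑ a ∈ A, (fib a).card :=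
    Finset.card_eq_sum_card_fiberwise (fun g hg => Finset.mem_image_of_mem _ hg)
  have hPcard : P.card = ∑ a ∈ A, (fib a).card ^ 2 := by
    have h1 : P.card = ∑ a ∈ A, (P.filter (fun p => piSlope r0 p.1 = a)).card :=
      Finset.card_eq_sum_card_fiberwise (by
        intro p hp
        exact Finset.mem_image_of_mem _ (((hmemP p).1 hp).1))
    rw [h1]
    refine Finset.sum_congr rfl ?_
    intro a _
    have h2 : P.filter (fun p => piSlope r0 p.1 = a) = (fib a) ×ˢ (fib a) := by
      ext p
      simp only [Finset.mem_filter, Finset.mem_product, hfib]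
      rw [hmemP p]
      constructor
      · rintro ⟨⟨h1', h2', h3'⟩, h4'⟩
        exact ⟨⟨h1', h4'⟩, ⟨h2', h3' ▸ h4'⟩⟩
      · rintro ⟨⟨h1', h2'⟩, ⟨h3', h4'⟩⟩
        exact ⟨⟨h1', h3', h2'.trans h4'.symm⟩, h2'⟩
    rw [h2, Finset.card_product, sq]
  have stepA : Gf.card ^ 2 ≤ M * P.card := by
    calc Gf.card ^ 2 = (∑ a ∈ A, (fib a).card) ^ 2 := by rw [hA]
      _ ≤ A.card * ∑ a ∈ A, (fib a).card ^ 2 := by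
          have := sq_sum_le_card_mul_sum_sq (s := A) (f := fun a => (fib a).card)
          simpa using this
      _ ≤ M * P.card := by
          rw [← hPcard]
          exact Nat.mul_le_mul_right _ (him r0 (by simp))
  -- slicing by the value of vf
  set V : Finset Z := P.image vf with hVdef
  set Pv : Z → Finset ((Z × Z) × (Z × Z)) := fun v => P.filter (fun p => vf p = v) with hPv
  have hPV : P.card = ∑ v ∈ V, (Pv v).card :=
    Finset.card_eq_sum_card_fiberwise (fun p hp => Finset.mem_image_of_mem _ hp)
  set im1 : Z → Finset Z := fun v => (Pv v).image (fun p => piSlope r1 p.1) with him1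
  set im2 : Z → Finset Z := fun v => (Pv v).image (fun p => piSlope r2 p.1) with him2
  -- Step D : each slice has at most M elements
  have stepD : ∀ v, (Pv v).card ≤ M := by
    intro v
    have : (Pv v).card ≤ (Gf.image (piSlope rinf)).card := by
      apply Finset.card_le_card_of_injOn (fun p => piSlope rinf p.1)
      · intro p hp
        have hp' := (hmemP p).1 (Finset.mem_filter.1 hp).1
        exact Finset.mem_image_of_mem _ hp'.1
      · intro p hp q hq he
        have he' : piSlope rinf p.1 = piSlope rinf q.1 := he
        have hp2 := Finset.mem_filter.1 (Finset.mem_coe.1 hp)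
        have hq2 := Finset.mem_filter.1 (Finset.mem_coe.1 hq)
        obtain ⟨hpP, hpv⟩ := hp2
        obtain ⟨hqP, hqv⟩ := hq2
        have hpm := (hmemP p).1 hpP
        have hqm := (hmemP q).1 hqP
        have hveq : vf p = vf q := hpv.trans hqv.symm
        have h2 : piSlope (some (-1)) p.2 = piSlope (some (-1)) q.2 := by
          have hthis := hveq
          simp only [hvf] at hthis
          rw [he'] at hthis
          exact add_left_cancel hthis
        have h2' : p.2 = q.2 := hinj (hmemG _ hpm.2.1) (hmemG _ hqm.2.1) h2
        have h0eq : piSlope r0 p.1 = piSlope r0 q.1 := by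
          rw [hpm.2.2, hqm.2.2, h2']
        have h1' : p.1 = q.1 := piSlope_inj2 h0inf h0eq he'
        exact Prod.ext h1' h2'
    exact this.trans (him rinf (by simp))
  -- Step C : slice card ≤ (im1 v).card * (im2 v).card
  have stepC : ∀ v, (Pv v).card ≤ (im1 v).card * (im2 v).card := by
    intro v
    have : (Pv v).card ≤ ((im1 v) ×ˢ (im2 v)).card := by
      apply Finset.card_le_card_of_injOn (fun p => (piSlope r1 p.1, piSlope r2 p.1))
      · intro p hp
        exact Finset.mem_product.2 ⟨Finset.mem_image_of_mem _ hp, Finset.mem_image_of_mem _ hp⟩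
      · intro p hp q hq he
        have hp2 := Finset.mem_filter.1 (Finset.mem_coe.1 hp)
        have hq2 := Finset.mem_filter.1 (Finset.mem_coe.1 hq)
        obtain ⟨hpP, hpv⟩ := hp2
        obtain ⟨hqP, hqv⟩ := hq2
        have hpm := (hmemP p).1 hpP
        have hqm := (hmemP q).1 hqP
        have he1 : piSlope r1 p.1 = piSlope r1 q.1 := congrArg Prod.fst he
        have he2 : piSlope r2 p.1 = piSlope r2 q.1 := congrArg Prod.snd he
        have h1' : p.1 = q.1 := piSlope_inj2 h12 he1 he2
        have hveq : vf p = vf q := hpv.trans hqv.symm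
        have h2 : piSlope (some (-1)) p.2 = piSlope (some (-1)) q.2 := by
          simp only [hvf] at hveq
          rw [h1'] at hveq
          exact add_left_cancel hveq
        have h2' : p.2 = q.2 := hinj (hmemG _ hpm.2.1) (hmemG _ hqm.2.1) h2
        exact Prod.ext h1' h2'
    exact this.trans_eq (Finset.card_product _ _)
  -- Step E : ∑ v, (imi v).card ≤ M * M
  have stepE : ∀ (ri ri' : Option ℝ) (xi yi : ℝ), yi ≠ 0 →
      (∀ p ∈ P, vf p = xi • piSlope ri p.1 + yi • piSlope ri' p.2) →
      (∀ v, ((Pv v).image (fun p => piSlope ri p.1)) = ((Pv v).image (fun p => piSlope ri p.1))) →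
      ri ∈ ({r0, r1, r1', r2, r2', rinf} : Finset (Option ℝ)) →
      ri' ∈ ({r0, r1, r1', r2, r2', rinf} : Finset (Option ℝ)) →
      ∑ v ∈ V, ((Pv v).image (fun p => piSlope ri p.1)).card ≤ M * M := by
    intro ri ri' xi yi hyi hident _ hri hri'
    set S1 : Finset (Z × Z) := V.biUnion (fun v => {v} ×ˢ ((Pv v).image (fun p => piSlope ri p.1)))
      with hS1
    have hsum : S1.card = ∑ v ∈ V, ((Pv v).image (fun p => piSlope ri p.1)).card := by
      rw [hS1, Finset.card_biUnion]
      · refine Finset.sum_congr rfl ?_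
        intro v _
        rw [Finset.card_product, Finset.card_singleton, one_mul]
      · intro u hu w hw huw
        simp only [Finset.disjoint_left, Finset.mem_product, Finset.mem_singleton]
        rintro ⟨q1, q2⟩ ⟨hq1, _⟩ ⟨hq1', _⟩
        exact huw (hq1 ▸ hq1')
    have hbound : S1.card ≤ ((Gf.image (piSlope ri)) ×ˢ (Gf.image (piSlope ri'))).card := by
      apply Finset.card_le_card_of_injOn (fun q => (q.2, yi⁻¹ • (q.1 - xi • q.2)))
      · rintro ⟨v, w⟩ hq
        have hq : (v, w) ∈ S1 := hq
        simp only [hS1, Finset.mem_biUnion, Finset.mem_product, Finset.mem_singleton] at hq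
        obtain ⟨v', hv', hv'', hw⟩ := hq
        subst hv''
        simp only [Finset.mem_image] at hw
        obtain ⟨p, hp, hpw⟩ := hw
        have hpP : p ∈ P := (Finset.mem_filter.1 hp).1
        have hpv : vf p = v := (Finset.mem_filter.1 hp).2
        have hpm := (hmemP p).1 hpP
        have hid := hident p hpP
        rw [hpv, hpw] at hid
        refine Finset.mem_product.2 ⟨?_, ?_⟩
        · exact hpw ▸ Finset.mem_image_of_mem _ hpm.1
        · have : yi⁻¹ • (v - xi • w) = piSlope ri' p.2 := by
            rw [hid]
            rw [add_sub_cancel_left]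
            rw [inv_smul_smul₀ hyi]
          show yi⁻¹ • (v - xi • w) ∈ Finset.image (piSlope ri') Gf
          rw [this]
          exact Finset.mem_image_of_mem _ hpm.2.1
      · rintro ⟨v, w⟩ hvw ⟨v', w'⟩ hv'w' he
        simp only [Prod.mk.injEq] at he
        obtain ⟨hw, hrest⟩ := he
        have : v - xi • w = v' - xi • w' := by
          have := congrArg (fun u => yi • u) hrest
          simpa [smul_inv_smul₀ hyi] using this
        rw [hw] at this
        have hv : v = v' := by
          have := congrArg (fun u => u + xi • w') this
          simpa [sub_add_cancel] using this
        simp [hv, hw]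
    have hprod : ((Gf.image (piSlope ri)) ×ˢ (Gf.image (piSlope ri'))).card ≤ M * M := by
      rw [Finset.card_product]
      exact Nat.mul_le_mul (him ri hri) (him ri' hri')
    rw [← hsum]
    exact hbound.trans hprod
  have hE1 : ∑ v ∈ V, (im1 v).card ≤ M * M :=
    stepE r1 r1' x1 y1 hy1 hident1 (fun _ => rfl) (by simp) (by simp)
  have hE2 : ∑ v ∈ V, (im2 v).card ≤ M * M :=
    stepE r2 r2' x2 y2 hy2 hident2 (fun _ => rfl) (by simp) (by simp)
  have hMnn : (0:ℝ) ≤ (M:ℝ) := Nat.cast_nonneg M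
  -- Step F : P.card ≤ sqrt M * M^2
  have h52 : (P.card : ℝ) ≤ Real.sqrt M * ((M:ℝ) * (M:ℝ)) := by
    have h1 : (P.card : ℝ) = ∑ v ∈ V, ((Pv v).card : ℝ) := by
      rw [hPV]; push_cast; ring
    have h2 : ∀ v ∈ V, ((Pv v).card : ℝ) ≤
        Real.sqrt M * (Real.sqrt ((im1 v).card) * Real.sqrt ((im2 v).card)) := by
      intro v _
      have h3 : ((Pv v).card : ℝ) ≤ (M:ℝ) := by exact_mod_cast stepD v
      have h4 : ((Pv v).card : ℝ) ≤ ((im1 v).card : ℝ) * ((im2 v).card : ℝ) := by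
        exact_mod_cast stepC v
      have h5 : (0:ℝ) ≤ ((Pv v).card : ℝ) := Nat.cast_nonneg _
      have hm2 : ((Pv v).card : ℝ)^2 ≤ (M:ℝ) * (((im1 v).card : ℝ) * ((im2 v).card : ℝ)) := by
        nlinarith
      have h6 : ((Pv v).card : ℝ) = Real.sqrt (((Pv v).card : ℝ)^2) :=
        (Real.sqrt_sq h5).symm
      rw [h6]
      calc Real.sqrt (((Pv v).card : ℝ)^2)
          ≤ Real.sqrt ((M:ℝ) * (((im1 v).card : ℝ) * ((im2 v).card : ℝ))) :=
            Real.sqrt_le_sqrt hm2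
        _ = Real.sqrt M * (Real.sqrt ((im1 v).card) * Real.sqrt ((im2 v).card)) := by
            rw [Real.sqrt_mul hMnn, Real.sqrt_mul (Nat.cast_nonneg _)]
    calc (P.card : ℝ) = ∑ v ∈ V, ((Pv v).card : ℝ) := h1
      _ ≤ ∑ v ∈ V, Real.sqrt M * (Real.sqrt ((im1 v).card) * Real.sqrt ((im2 v).card)) :=
          Finset.sum_le_sum h2
      _ = Real.sqrt M * ∑ v ∈ V, Real.sqrt ((im1 v).card) * Real.sqrt ((im2 v).card) := by
          rw [Finset.mul_sum]
      _ ≤ Real.sqrt M * (Real.sqrt (∑ v ∈ V, ((im1 v).card : ℝ)) *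
            Real.sqrt (∑ v ∈ V, ((im2 v).card : ℝ))) := by
          refine mul_le_mul_of_nonneg_left ?_ (Real.sqrt_nonneg _)
          exact Real.sum_sqrt_mul_sqrt_le V (fun v => Nat.cast_nonneg _)
            (fun v => Nat.cast_nonneg _)
      _ ≤ Real.sqrt M * ((M:ℝ) * (M:ℝ)) := by
          refine mul_le_mul_of_nonneg_left ?_ (Real.sqrt_nonneg _)
          have hA1 : (∑ v ∈ V, ((im1 v).card : ℝ)) ≤ (M:ℝ) * (M:ℝ) := by
            exact_mod_cast hE1
          have hA2 : (∑ v ∈ V, ((im2 v).card : ℝ)) ≤ (M:ℝ) * (M:ℝ) := by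
            exact_mod_cast hE2
          have hs1 : Real.sqrt (∑ v ∈ V, ((im1 v).card : ℝ)) ≤ (M:ℝ) := by
            calc Real.sqrt (∑ v ∈ V, ((im1 v).card : ℝ)) ≤ Real.sqrt ((M:ℝ) * (M:ℝ)) :=
                  Real.sqrt_le_sqrt hA1
              _ = (M:ℝ) := Real.sqrt_mul_self hMnn
          have hs2 : Real.sqrt (∑ v ∈ V, ((im2 v).card : ℝ)) ≤ (M:ℝ) := by
            calc Real.sqrt (∑ v ∈ V, ((im2 v).card : ℝ)) ≤ Real.sqrt ((M:ℝ) * (M:ℝ)) :=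
                  Real.sqrt_le_sqrt hA2
              _ = (M:ℝ) := Real.sqrt_mul_self hMnn
          exact mul_le_mul hs1 hs2 (Real.sqrt_nonneg _) hMnn
  -- conclude K^4 ≤ M^7
  have hK4 : (Gf.card : ℝ)^4 ≤ (M:ℝ)^7 := by
    have hK2 : (Gf.card : ℝ)^2 ≤ (M:ℝ) * (P.card : ℝ) := by exact_mod_cast stepA
    have hPnn : (0:ℝ) ≤ (P.card : ℝ) := Nat.cast_nonneg _
    calc (Gf.card : ℝ)^4 = ((Gf.card : ℝ)^2)^2 := by ring
      _ ≤ ((M:ℝ) * (P.card : ℝ))^2 := pow_le_pow_left₀ (sq_nonneg _) hK2 2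
      _ = (M:ℝ)^2 * ((P.card : ℝ))^2 := by ring
      _ ≤ (M:ℝ)^2 * (Real.sqrt M * ((M:ℝ) * (M:ℝ)))^2 := by
          refine mul_le_mul_of_nonneg_left ?_ (by positivity)
          exact pow_le_pow_left₀ hPnn h52 2
      _ = (M:ℝ)^2 * ((Real.sqrt M)^2 * ((M:ℝ) * (M:ℝ))^2) := by ring
      _ = (M:ℝ)^7 := by rw [Real.sq_sqrt hMnn]; ring
  -- final rpow manipulation
  rw [hK]
  have h0' : (0:ℝ) ≤ (Gf.card : ℝ) := Nat.cast_nonneg _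
  have hstep : ((Gf.card : ℝ) ^ (4:ℕ)) ^ ((1:ℝ)/4) ≤ ((M:ℝ) ^ (7:ℕ)) ^ ((1:ℝ)/4) :=
    Real.rpow_le_rpow (by positivity) (by exact_mod_cast hK4) (by norm_num)
  rw [← Real.rpow_natCast (Gf.card : ℝ) 4, ← Real.rpow_natCast (M:ℝ) 7,
      ← Real.rpow_mul h0', ← Real.rpow_mul hMnn] at hstep
  have e4 : ((4:ℕ):ℝ) * ((1:ℝ)/4) = 1 := by norm_num
  have e7 : ((7:ℕ):ℝ) * ((1:ℝ)/4) = 7/4 := by norm_num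
  rw [e4, e7, Real.rpow_one] at hstep
  exact hstep
end

section
/- Let n ≥ 2 be an integer. For every ε > 0 there exists a constant C_ε (depending only on ε, n and the constant C₀ in the definition of discretized lines) such that for every integer N ≥ 2, every separated collection 𝐓 of discretized lines in ℝⁿ, and any two distinct discretized points x₁, x₂ ∈ P, the number of lines of 𝐓 containing both x₁ and x₂ satisfies #{T ∈ 𝐓 : x₁ ∈ T and x₂ ∈ T} ≤ C_ε · N^ε · |x₁ − x₂|^{1−n}. -/
noncomputable section

/-- The discretized points: `P = N⁻¹ℤ^m ∩ B(0, C₀)`. -/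
def discPts (m N : ℕ) (C₀ : ℝ) : Set (EuclideanSpace ℝ (Fin m)) :=
  {x | (∀ i, ∃ k : ℤ, x i = (k : ℝ) / N) ∧ ‖x‖ ≤ C₀}

/-- The direction of the last coordinate axis. -/
def lastCoordDir (m : ℕ) : EuclideanSpace ℝ (Fin m) :=
  if h : 0 < m then EuclideanSpace.single ⟨m - 1, Nat.sub_lt h one_pos⟩ 1 else 0

/-- A discretized line in `ℝ^m` at scale `1/N`: it is recorded by a point `pt` and a unit
direction `dir` making angle at most `1/100` with the last coordinate direction; its point
set is `{x ∈ P : dist(x, ℓ) ≤ C₀/N}` where `ℓ` is the Euclidean line through `pt` with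
direction `dir` (see `DiscLine.pts`). -/
structure DiscLine (m N : ℕ) (C₀ : ℝ) where
  pt : EuclideanSpace ℝ (Fin m)
  dir : EuclideanSpace ℝ (Fin m)
  norm_dir : ‖dir‖ = 1
  angle_le : InnerProductGeometry.angle dir (lastCoordDir m) ≤ 1 / 100

/-- The underlying Euclidean line of a discretized line. -/
def DiscLine.core {m N : ℕ} {C₀ : ℝ} (L : DiscLine m N C₀) :
    Set (EuclideanSpace ℝ (Fin m)) :=
  {y | ∃ t : ℝ, y = L.pt + t • L.dir}

/-- The set of discretized points of a discretized line:
`{x ∈ P : dist(x, ℓ) ≤ C₀/N}`. -/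
def DiscLine.pts {m N : ℕ} {C₀ : ℝ} (L : DiscLine m N C₀) :
    Set (EuclideanSpace ℝ (Fin m)) :=
  {x | x ∈ discPts m N C₀ ∧ Metric.infDist x L.core ≤ C₀ / N}

/-- A collection of discretized lines is separated if the directions of any two distinct
members make an angle of at least `1/N`. -/
def SeparatedLines {m N : ℕ} {C₀ : ℝ} (Ts : Set (DiscLine m N C₀)) : Prop :=
  ∀ T₁ ∈ Ts, ∀ T₂ ∈ Ts, T₁ ≠ T₂ →
    1 / (N : ℝ) ≤ InnerProductGeometry.angle T₁.dir T₂.dir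

/-- The Kakeya estimate `K(n, d)` (with ambient constant `C₀`): for every `ε > 0` there is
`c_ε > 0` such that every separated collection `Ts` of discretized lines in any ambient
dimension `m ≥ 2` satisfying the direction-count condition (a) and the saturation
condition (b), together with any shading `Y` with `#Y(T) ≥ N^{1-ε}`, obeys
`#(⋃ Y(T)) ≥ c_ε N^{d-ε}`. -/
def KakeyaEst (C₀ : ℝ) (n d : ℝ) : Prop :=
  ∀ ε : ℝ, 0 < ε → ∃ c : ℝ, 0 < c ∧
    ∀ m : ℕ, 2 ≤ m → ∀ N : ℕ, 2 ≤ N →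
      ∀ Ts : Set (DiscLine m N C₀), SeparatedLines Ts →
        (∀ ω : EuclideanSpace ℝ (Fin m), ‖ω‖ = 1 → ∀ θ : ℝ, 1 / (N : ℝ) ≤ θ → θ ≤ 1 →
          (({T | T ∈ Ts ∧ InnerProductGeometry.angle T.dir ω ≤ θ}).ncard : ℝ) ≤
            (N : ℝ) ^ ε * ((N : ℝ) * θ) ^ (n - 1)) →
        (N : ℝ) ^ (n - 1 - ε) ≤ (Ts.ncard : ℝ) →
        ∀ Y : DiscLine m N C₀ → Set (EuclideanSpace ℝ (Fin m)),
          (∀ T ∈ Ts, Y T ⊆ T.pts) →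
          (∀ T ∈ Ts, (N : ℝ) ^ ((1 : ℝ) - ε) ≤ ((Y T).ncard : ℝ)) →
          c * (N : ℝ) ^ (d - ε) ≤ ((⋃ T ∈ Ts, Y T).ncard : ℝ)

end


section Aux

open Metric MeasureTheory Set
open scoped ENNReal RealInnerProductSpace


/-- Volume packing: a `ρ`-separated subset of a ball of radius `R` in `ℝ^k` has at most
`(2R/ρ+1)^k` elements. -/
lemma packing_count {k : ℕ} (hk : 1 ≤ k) {S : Set (EuclideanSpace ℝ (Fin k))}
    {c : EuclideanSpace ℝ (Fin k)} {R ρ : ℝ} (hρ : 0 < ρ) (hR : 0 ≤ R)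
    (hS : S ⊆ Metric.closedBall c R)
    (hsep : S.Pairwise fun x y => ρ ≤ dist x y) :
    S.Finite ∧ (S.ncard : ℝ) ≤ (2 * R / ρ + 1) ^ k := by
  haveI : Nonempty (Fin k) := ⟨⟨0, by omega⟩⟩
  haveI : Nontrivial (EuclideanSpace ℝ (Fin k)) := inferInstance
  set μ : Measure (EuclideanSpace ℝ (Fin k)) := volume with hμ
  have hv0 : μ (ball 0 1) ≠ 0 := (measure_ball_pos μ 0 one_pos).ne'
  have hvt : μ (ball 0 1) ≠ ⊤ := measure_ball_lt_top.ne
  have key : ∀ F : Finset (EuclideanSpace ℝ (Fin k)), ↑F ⊆ S →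
      (F.card : ℝ) ≤ (2 * R / ρ + 1) ^ k := by
    intro F hF
    have hdisj : (↑F : Set (EuclideanSpace ℝ (Fin k))).PairwiseDisjoint
        (fun x => ball x (ρ / 2)) := by
      intro x hx y hy hxy
      exact ball_disjoint_ball (by linarith [hsep (hF hx) (hF hy) hxy])
    have hsum : μ (⋃ x ∈ F, ball x (ρ / 2)) = ∑ x ∈ F, μ (ball x (ρ / 2)) :=
      measure_biUnion_finset hdisj (fun x _ => measurableSet_ball)
    have hball : ∀ x : EuclideanSpace ℝ (Fin k),
        μ (ball x (ρ / 2)) = ENNReal.ofReal ((ρ / 2) ^ k) * μ (ball 0 1) := by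
      intro x
      rw [hμ, Measure.addHaar_ball _ x (by positivity : (0:ℝ) ≤ ρ / 2),
        finrank_euclideanSpace_fin]
    have hsub : (⋃ x ∈ F, ball x (ρ / 2)) ⊆ ball c (R + ρ / 2) := by
      intro z hz
      simp only [mem_iUnion, exists_prop] at hz
      obtain ⟨x, hxF, hzx⟩ := hz
      have := hS (hF hxF)
      rw [mem_closedBall] at this
      rw [mem_ball] at hzx ⊢
      calc dist z c ≤ dist z x + dist x c := dist_triangle _ _ _
        _ < ρ / 2 + R := by linarith
        _ = R + ρ / 2 := by ring
    have hle : (F.card : ℝ≥0∞) * (ENNReal.ofReal ((ρ / 2) ^ k) * μ (ball 0 1)) ≤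
        ENNReal.ofReal ((R + ρ / 2) ^ k) * μ (ball 0 1) := by
      calc (F.card : ℝ≥0∞) * (ENNReal.ofReal ((ρ / 2) ^ k) * μ (ball 0 1))
          = ∑ _x ∈ F, (ENNReal.ofReal ((ρ / 2) ^ k) * μ (ball 0 1)) := by
            rw [Finset.sum_const, nsmul_eq_mul]
        _ = μ (⋃ x ∈ F, ball x (ρ / 2)) := by
            rw [hsum]; exact (Finset.sum_congr rfl fun x _ => (hball x)).symm
        _ ≤ μ (ball c (R + ρ / 2)) := measure_mono hsub
        _ = ENNReal.ofReal ((R + ρ / 2) ^ k) * μ (ball 0 1) := by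
            rw [hμ, Measure.addHaar_ball _ c (by positivity : (0:ℝ) ≤ R + ρ / 2),
              finrank_euclideanSpace_fin]
    rw [← mul_assoc] at hle
    have hle2 : (F.card : ℝ≥0∞) * ENNReal.ofReal ((ρ / 2) ^ k) ≤
        ENNReal.ofReal ((R + ρ / 2) ^ k) :=
      (ENNReal.mul_le_mul_iff_left hv0 hvt).mp hle
    have hreal : (F.card : ℝ) * (ρ / 2) ^ k ≤ (R + ρ / 2) ^ k := by
      have := hle2
      rw [← ENNReal.ofReal_natCast, ← ENNReal.ofReal_mul (by positivity)] at this
      exact (ENNReal.ofReal_le_ofReal_iff (by positivity)).mp this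
    have hpos : (0:ℝ) < (ρ / 2) ^ k := by positivity
    rw [← le_div_iff₀ hpos] at hreal
    calc (F.card : ℝ) ≤ (R + ρ / 2) ^ k / (ρ / 2) ^ k := hreal
      _ = ((R + ρ / 2) / (ρ / 2)) ^ k := (div_pow _ _ _).symm
      _ = (2 * R / ρ + 1) ^ k := by
          congr 1
          field_simp
  have hfin : S.Finite := by
    by_contra hinf
    have hinf' : S.Infinite := hinf
    obtain ⟨t, hts, htfin, htcard⟩ :=
      hinf'.exists_subset_ncard_eq (⌈(2 * R / ρ + 1) ^ k⌉₊ + 1)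
    have := key htfin.toFinset (by simpa using hts)
    rw [Set.ncard_eq_toFinset_card _ htfin] at htcard
    rw [htcard] at this
    have h1 : ((2 * R / ρ + 1) ^ k : ℝ) ≤ ⌈(2 * R / ρ + 1) ^ k⌉₊ := Nat.le_ceil _
    push_cast at this
    linarith
  refine ⟨hfin, ?_⟩
  have := key hfin.toFinset (by simp)
  rwa [← Set.ncard_eq_toFinset_card _ hfin] at this
variable {E : Type*} [NormedAddCommGroup E] [InnerProductSpace ℝ E]

lemma norm_sub_sq_unit {a b : E} (ha : ‖a‖ = 1) (hb : ‖b‖ = 1) :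
    ‖a - b‖ ^ 2 = 2 - 2 * ⟪a, b⟫ := by
  rw [norm_sub_sq_real, ha, hb]; ring

lemma inner_unit_eq_cos {a b : E} (ha : ‖a‖ = 1) (hb : ‖b‖ = 1) :
    ⟪a, b⟫ = Real.cos (InnerProductGeometry.angle a b) := by
  rw [InnerProductGeometry.cos_angle, ha, hb]; simp

/-- Separation: angle at least `x` implies chord at least `x/2` (for `0 ≤ x ≤ 1`). -/
lemma chord_lower {a b : E} (ha : ‖a‖ = 1) (hb : ‖b‖ = 1) {x : ℝ}
    (hx0 : 0 ≤ x) (hx1 : x ≤ 1) (hang : x ≤ InnerProductGeometry.angle a b) :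
    x / 2 ≤ ‖a - b‖ := by
  have hcos : Real.cos (InnerProductGeometry.angle a b) ≤ Real.cos x :=
    Real.cos_le_cos_of_nonneg_of_le_pi hx0 (InnerProductGeometry.angle_le_pi a b) hang
  have hbd : |Real.cos x - (1 - x ^ 2 / 2)| ≤ |x| ^ 4 * (5 / 96) :=
    Real.cos_bound (by rw [abs_of_nonneg hx0]; exact hx1)
  rw [abs_of_nonneg hx0, abs_le] at hbd
  have hx4 : x ^ 4 ≤ x ^ 2 := pow_le_pow_of_le_one hx0 hx1 (by norm_num)
  have hcx : Real.cos x ≤ 1 - x ^ 2 / 4 := by nlinarith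
  have hinner : ⟪a, b⟫ ≤ 1 - x ^ 2 / 4 := by
    rw [inner_unit_eq_cos ha hb]; linarith
  have hsq : (x / 2) ^ 2 ≤ ‖a - b‖ ^ 2 := by
    rw [norm_sub_sq_unit ha hb]; nlinarith
  exact le_of_pow_le_pow_left₀ two_ne_zero (norm_nonneg _) hsq

/-- Angle at most `x` implies chord at most `2x` (for `0 ≤ x ≤ 1`). -/
lemma chord_upper {a b : E} (ha : ‖a‖ = 1) (hb : ‖b‖ = 1) {x : ℝ}
    (hx0 : 0 ≤ x) (hx1 : x ≤ 1) (hang : InnerProductGeometry.angle a b ≤ x) :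
    ‖a - b‖ ≤ 2 * x := by
  set θ := InnerProductGeometry.angle a b with hθ
  have hθ0 : 0 ≤ θ := InnerProductGeometry.angle_nonneg a b
  have hθ1 : θ ≤ 1 := hang.trans hx1
  have hbd : |Real.cos θ - (1 - θ ^ 2 / 2)| ≤ |θ| ^ 4 * (5 / 96) :=
    Real.cos_bound (by rw [abs_of_nonneg hθ0]; exact hθ1)
  rw [abs_of_nonneg hθ0, abs_le] at hbd
  have hθ4 : θ ^ 4 ≤ θ ^ 2 := pow_le_pow_of_le_one hθ0 hθ1 (by norm_num)
  have hcθ : 1 - θ ^ 2 ≤ Real.cos θ := by nlinarith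
  have hinner : 1 - θ ^ 2 ≤ ⟪a, b⟫ := by rw [inner_unit_eq_cos ha hb]; linarith
  have hsq : ‖a - b‖ ^ 2 ≤ (2 * x) ^ 2 := by
    rw [norm_sub_sq_unit ha hb]
    nlinarith [pow_le_pow_left₀ hθ0 hang 2]
  exact le_of_pow_le_pow_left₀ two_ne_zero (by linarith) hsq

set_option maxHeartbeats 1000000 in
/-- Counting `ρ`-separated unit vectors in a spherical cap of chordal radius `δ ≤ 1/2`:
at most `(4δ/ρ+1)^(n-1)`. -/
lemma cap_count {n : ℕ} (hn : 2 ≤ n) {u : EuclideanSpace ℝ (Fin n)} (hu : ‖u‖ = 1)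
    {δ ρ : ℝ} (hδ0 : 0 ≤ δ) (hδ : δ ≤ 1 / 2) (hρ : 0 < ρ)
    {S : Set (EuclideanSpace ℝ (Fin n))}
    (hS : ∀ v ∈ S, ‖v‖ = 1 ∧ ‖v - u‖ ≤ δ)
    (hsep : S.Pairwise fun x y => ρ ≤ dist x y) :
    S.Finite ∧ (S.ncard : ℝ) ≤ (4 * δ / ρ + 1) ^ (n - 1) := by
  classical
  set K : Submodule ℝ (EuclideanSpace ℝ (Fin n)) := (ℝ ∙ u)ᗮ with hK
  have memK : ∀ w : EuclideanSpace ℝ (Fin n), w - ⟪w, u⟫ • u ∈ K := by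
    intro w
    rw [hK, Submodule.mem_orthogonal]
    intro y hy
    obtain ⟨t, rfl⟩ := Submodule.mem_span_singleton.mp hy
    rw [inner_smul_left, inner_sub_right, inner_smul_right, real_inner_self_eq_norm_sq, hu]
    simp [real_inner_comm u w]
  set P : EuclideanSpace ℝ (Fin n) → K := fun w => ⟨w - ⟪w, u⟫ • u, memK w⟩ with hP
  have hPval : ∀ w, ((P w : EuclideanSpace ℝ (Fin n))) = w - ⟪w, u⟫ • u := fun w => rfl
  have hPnorm : ∀ w, ‖P w‖ ^ 2 = ‖w‖ ^ 2 - ⟪w, u⟫ ^ 2 := by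
    intro w
    rw [show ‖P w‖ = ‖(P w : EuclideanSpace ℝ (Fin n))‖ from rfl, hPval, norm_sub_sq_real,
      inner_smul_right, norm_smul, hu, Real.norm_eq_abs, mul_one, sq_abs]
    ring
  -- P is "linear" on differences
  have hPsub : ∀ v w, (P v : EuclideanSpace ℝ (Fin n)) - P w
      = (v - w) - ⟪v - w, u⟫ • u := by
    intro v w
    rw [hPval, hPval, inner_sub_left, sub_smul]
    abel
  have hPdiff : ∀ v w, ‖P v - P w‖ ^ 2 = ‖v - w‖ ^ 2 - ⟪v - w, u⟫ ^ 2 := by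
    intro v w
    rw [show ‖P v - P w‖ = ‖(P v : EuclideanSpace ℝ (Fin n)) - (P w : EuclideanSpace ℝ (Fin n))‖
        from rfl, hPsub, norm_sub_sq_real, inner_smul_right, norm_smul, hu,
      Real.norm_eq_abs, mul_one, sq_abs]
    ring
  -- key inner product bound on the cap
  have hinner : ∀ v ∈ S, ∀ w ∈ S, |⟪v - w, u⟫| ≤ δ * ‖v - w‖ := by
    intro v hv w hw
    obtain ⟨hv1, hvδ⟩ := hS v hv
    obtain ⟨hw1, hwδ⟩ := hS w hw
    have h1 : ⟪v, u⟫ = 1 - ‖v - u‖ ^ 2 / 2 := by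
      have := norm_sub_sq_unit hv1 hu; linarith
    have h2 : ⟪w, u⟫ = 1 - ‖w - u‖ ^ 2 / 2 := by
      have := norm_sub_sq_unit hw1 hu; linarith
    have h3 : ⟪v - w, u⟫ = (‖w - u‖ ^ 2 - ‖v - u‖ ^ 2) / 2 := by
      rw [inner_sub_left, h1, h2]; ring
    have h4 : |‖w - u‖ - ‖v - u‖| ≤ ‖v - w‖ := by
      rw [abs_sub_comm]
      have := abs_norm_sub_norm_le (v - u) (w - u)
      simpa [sub_sub_sub_cancel_right] using this
    rw [h3, abs_div, abs_two]
    have h5 : |‖w - u‖ ^ 2 - ‖v - u‖ ^ 2| ≤ ‖v - w‖ * (2 * δ) := by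
      have hfac : ‖w - u‖ ^ 2 - ‖v - u‖ ^ 2 = (‖w - u‖ - ‖v - u‖) * (‖w - u‖ + ‖v - u‖) := by
        ring
      rw [hfac, abs_mul]
      have h6 : |‖w - u‖ + ‖v - u‖| ≤ 2 * δ := by
        rw [abs_of_nonneg (by positivity)]; linarith
      exact mul_le_mul h4 h6 (abs_nonneg _) (norm_nonneg _)
    linarith
  -- lower bound for distances of projections
  have hPdist : ∀ v ∈ S, ∀ w ∈ S, ‖v - w‖ / 2 ≤ ‖P v - P w‖ := by
    intro v hv w hw
    have h1 := hPdiff v w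
    have h2 := hinner v hv w hw
    have hsq : (‖v - w‖ / 2) ^ 2 ≤ ‖P v - P w‖ ^ 2 := by
      rw [h1]
      have : ⟪v - w, u⟫ ^ 2 ≤ (δ * ‖v - w‖) ^ 2 := by
        rw [← sq_abs]
        exact pow_le_pow_left₀ (abs_nonneg _) h2 2
      nlinarith [norm_nonneg (v - w), sq_nonneg ‖v - w‖, pow_le_pow_left₀ hδ0 hδ 2,
        mul_le_mul_of_nonneg_right (pow_le_pow_left₀ hδ0 hδ 2) (sq_nonneg ‖v - w‖)]
    exact le_of_pow_le_pow_left₀ two_ne_zero (norm_nonneg _) hsq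
  -- the isometry to ℝ^(n-1)
  haveI : FiniteDimensional ℝ K := inferInstance
  have hrank : Module.finrank ℝ K = n - 1 := by
    have h1 : Module.finrank ℝ (ℝ ∙ u) = 1 :=
      finrank_span_singleton (by rw [← norm_ne_zero_iff, hu]; norm_num)
    have h2 := Submodule.finrank_add_finrank_orthogonal (𝕜 := ℝ) (ℝ ∙ u)
    rw [h1, finrank_euclideanSpace_fin, ← hK] at h2
    omega
  set B := stdOrthonormalBasis ℝ K
  set f : EuclideanSpace ℝ (Fin n) → EuclideanSpace ℝ (Fin (Module.finrank ℝ K)) :=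
    fun w => B.repr (P w) with hf
  have hfd : ∀ v w, dist (f v) (f w) = ‖P v - P w‖ := by
    intro v w
    rw [hf]
    simp only
    rw [dist_eq_norm, ← LinearIsometryEquiv.map_sub, LinearIsometryEquiv.norm_map]
  set S' := f '' S with hS'
  have hinj : S.InjOn f := by
    intro v hv w hw hvw
    by_contra hne
    have h1 : ρ ≤ dist v w := hsep hv hw hne
    have h2 := hPdist v hv w hw
    have h3 : dist (f v) (f w) = 0 := by rw [hvw, dist_self]
    rw [hfd] at h3
    rw [dist_eq_norm] at h1
    rw [h3] at h2
    have : ‖v - w‖ ≤ 0 := by linarith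
    have := lt_of_lt_of_le hρ h1
    linarith
  -- the image is ρ/2 separated in the ball of radius δ around 0
  have hball : S' ⊆ Metric.closedBall 0 δ := by
    rintro _ ⟨v, hv, rfl⟩
    obtain ⟨hv1, hvδ⟩ := hS v hv
    rw [Metric.mem_closedBall, dist_zero_right, hf]
    simp only
    rw [LinearIsometryEquiv.norm_map]
    have hPu : ⟪u, u⟫ = 1 := by rw [real_inner_self_eq_norm_sq, hu]; norm_num
    have hPu0 : P u = 0 := by
      apply Subtype.ext
      rw [hPval, hPu, one_smul, sub_self]
      rfl
    have : ‖P v‖ = ‖P v - P u‖ := by rw [hPu0, sub_zero]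
    rw [this]
    have hsq : ‖P v - P u‖ ^ 2 ≤ ‖v - u‖ ^ 2 := by
      rw [hPdiff]
      nlinarith [sq_nonneg ⟪v - u, u⟫]
    exact (le_of_pow_le_pow_left₀ two_ne_zero (by linarith [norm_nonneg (v-u)]) hsq).trans hvδ
  have hsep' : S'.Pairwise fun x y => ρ / 2 ≤ dist x y := by
    rintro _ ⟨v, hv, rfl⟩ _ ⟨w, hw, rfl⟩ hne
    have hvw : v ≠ w := fun h => hne (by rw [h])
    rw [hfd]
    calc ρ / 2 ≤ ‖v - w‖ / 2 := by
          have h : ρ ≤ dist v w := hsep hv hw hvw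
          rw [dist_eq_norm] at h; linarith
      _ ≤ ‖P v - P w‖ := hPdist v hv w hw
  have hpack := packing_count (k := Module.finrank ℝ K) (by omega)
    (by positivity : (0:ℝ) < ρ / 2) hδ0 hball hsep'
  obtain ⟨hfin', hcard'⟩ := hpack
  have hSfin : S.Finite := Set.Finite.of_finite_image hfin' hinj
  refine ⟨hSfin, ?_⟩
  have hcardeq : S'.ncard = S.ncard := Set.ncard_image_of_injOn hinj
  rw [hcardeq] at hcard'
  calc (S.ncard : ℝ) ≤ (2 * δ / (ρ / 2) + 1) ^ Module.finrank ℝ K := hcard'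
    _ = (4 * δ / ρ + 1) ^ (n - 1) := by
        rw [hrank]
        congr 2
        field_simp
        ring


lemma lastCoordDir_norm {m : ℕ} (hm : 0 < m) : ‖lastCoordDir m‖ = 1 := by
  rw [lastCoordDir, dif_pos hm, EuclideanSpace.norm_single]
  norm_num

lemma core_closed {m N : ℕ} {C₀ : ℝ} (L : DiscLine m N C₀) : IsClosed L.core := by
  have heq : L.core = (AffineSubspace.mk' L.pt (ℝ ∙ L.dir) : Set (EuclideanSpace ℝ (Fin m))) := by
    ext y
    simp only [DiscLine.core, Set.mem_setOf_eq, SetLike.mem_coe,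
      AffineSubspace.mem_mk', Submodule.mem_span_singleton]
    constructor
    · rintro ⟨t, rfl⟩
      exact ⟨t, by rw [vsub_eq_sub]; abel⟩
    · rintro ⟨t, ht⟩
      rw [vsub_eq_sub] at ht
      exact ⟨t, by rw [ht]; abel⟩
  rw [heq]
  haveI : FiniteDimensional ℝ (AffineSubspace.mk' L.pt (ℝ ∙ L.dir)).direction := by
    rw [AffineSubspace.direction_mk']; infer_instance
  exact AffineSubspace.closed_of_finiteDimensional _

lemma core_nonempty {m N : ℕ} {C₀ : ℝ} (L : DiscLine m N C₀) : L.core.Nonempty :=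
  ⟨L.pt, 0, by simp⟩

/-- If a discretized line passes near two points, its direction is close to `±` the unit
vector from one point to the other. -/
lemma dir_near {n N : ℕ} {C₀ : ℝ} (hC₀ : 0 < C₀) (hN : 0 < N) (L : DiscLine n N C₀)
    {x₁ x₂ : EuclideanSpace ℝ (Fin n)} (h₁ : Metric.infDist x₁ L.core ≤ C₀ / N)
    (h₂ : Metric.infDist x₂ L.core ≤ C₀ / N) (hne : x₁ ≠ x₂) :
    ‖L.dir - (dist x₁ x₂)⁻¹ • (x₂ - x₁)‖ ≤ 4 * C₀ / (N * dist x₁ x₂) ∨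
    ‖L.dir + (dist x₁ x₂)⁻¹ • (x₂ - x₁)‖ ≤ 4 * C₀ / (N * dist x₁ x₂) := by
  set d := dist x₁ x₂ with hdd
  have hd : 0 < d := dist_pos.mpr hne
  obtain ⟨p₁, hp₁, hdist₁⟩ := (core_closed L).exists_infDist_eq_dist (core_nonempty L) x₁
  obtain ⟨p₂, hp₂, hdist₂⟩ := (core_closed L).exists_infDist_eq_dist (core_nonempty L) x₂
  rw [hdist₁] at h₁
  rw [hdist₂] at h₂
  obtain ⟨t₁, rfl⟩ := hp₁
  obtain ⟨t₂, rfl⟩ := hp₂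
  set v := L.dir with hv
  set w := x₂ - x₁ with hw
  set t := t₂ - t₁ with ht
  have hNpos : (0:ℝ) < N := by exact_mod_cast hN
  have he : (0:ℝ) ≤ C₀ / N := by positivity
  have hwt : ‖w - t • v‖ ≤ 2 * (C₀ / N) := by
    have hid : w - t • v = (x₂ - (L.pt + t₂ • v)) - (x₁ - (L.pt + t₁ • v)) := by
      rw [hw, ht, sub_smul]; abel
    rw [hid]
    calc ‖(x₂ - (L.pt + t₂ • v)) - (x₁ - (L.pt + t₁ • v))‖
        ≤ ‖x₂ - (L.pt + t₂ • v)‖ + ‖x₁ - (L.pt + t₁ • v)‖ := norm_sub_le _ _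
      _ ≤ C₀ / N + C₀ / N := by
          rw [← dist_eq_norm, ← dist_eq_norm]
          exact add_le_add h₂ h₁
      _ = 2 * (C₀ / N) := by ring
  have hwd : ‖w‖ = d := by rw [hw, hdd, dist_eq_norm']
  have htv : ‖t • v‖ = |t| := by rw [norm_smul, hv, L.norm_dir, Real.norm_eq_abs, mul_one]
  have habs : |(|t| - d)| ≤ 2 * (C₀ / N) := by
    calc |(|t| - d)| = |‖t • v‖ - ‖w‖| := by rw [htv, hwd]
      _ ≤ ‖t • v - w‖ := abs_norm_sub_norm_le _ _
      _ = ‖w - t • v‖ := norm_sub_rev _ _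
      _ ≤ 2 * (C₀ / N) := hwt
  have hkey : ∀ s : ℝ, |s| = d → ‖s • v - t • v‖ ≤ 2 * (C₀ / N) → ‖s • v - w‖ ≤ 4 * C₀ / N := by
    intro s hs hsv
    calc ‖s • v - w‖ ≤ ‖s • v - t • v‖ + ‖t • v - w‖ := norm_sub_le_norm_sub_add_norm_sub _ _ _
      _ ≤ 2 * (C₀ / N) + 2 * (C₀ / N) := by
          refine add_le_add hsv ?_
          rw [norm_sub_rev]; exact hwt
      _ = 4 * C₀ / N := by ring
  have hconv : ∀ s : ℝ, s ≠ 0 → ‖s • v - w‖ ≤ 4 * C₀ / N →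
      ‖v - s⁻¹ • w‖ ≤ 4 * C₀ / (N * |s|) := by
    intro s hs hsw
    have hid : s⁻¹ • (s • v - w) = v - s⁻¹ • w := by
      rw [smul_sub, smul_smul, inv_mul_cancel₀ hs, one_smul]
    rw [← hid, norm_smul, Real.norm_eq_abs, abs_inv]
    have habs0 : (0:ℝ) < |s| := abs_pos.mpr hs
    calc |s|⁻¹ * ‖s • v - w‖ ≤ |s|⁻¹ * (4 * C₀ / N) :=
          mul_le_mul_of_nonneg_left hsw (by positivity)
      _ = 4 * C₀ / (N * |s|) := by
          field_simp
  rcases le_or_gt 0 t with htpos | htneg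
  · left
    have h1 : ‖d • v - t • v‖ ≤ 2 * (C₀ / N) := by
      rw [← sub_smul, norm_smul, hv, L.norm_dir, Real.norm_eq_abs, mul_one]
      rw [abs_of_nonneg htpos] at habs
      rw [abs_sub_comm]
      exact habs
    have h2 := hkey d (abs_of_pos hd) h1
    have h3 := hconv d hd.ne' h2
    rw [abs_of_pos hd] at h3
    exact h3
  · right
    have h1 : ‖(-d) • v - t • v‖ ≤ 2 * (C₀ / N) := by
      rw [← sub_smul, norm_smul, hv, L.norm_dir, Real.norm_eq_abs, mul_one]
      rw [abs_of_neg htneg] at habs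
      have : |-d - t| = |(-t) - d| := by congr 1; ring
      rw [this]
      exact habs
    have h2 := hkey (-d) (by rw [abs_neg, abs_of_pos hd]) h1
    have h3 := hconv (-d) (by simp [hd.ne']) h2
    rw [abs_neg, abs_of_pos hd] at h3
    have h4 : (-d)⁻¹ • w = -(d⁻¹ • w) := by rw [← neg_inv, neg_smul]
    rw [h4, sub_neg_eq_add] at h3
    exact h3
end Aux

/-- Two distinct discretized points lie in at most `⪅ |x₁ - x₂|^{1-n}` lines of a
separated collection. -/
theorem lines_through_two_points (n : ℕ) (hn : 2 ≤ n) (C₀ : ℝ) (hC₀ : 100 ≤ C₀) :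
    ∀ ε : ℝ, 0 < ε → ∃ C : ℝ, 0 < C ∧
      ∀ N : ℕ, 2 ≤ N →
        ∀ Ts : Set (DiscLine n N C₀), SeparatedLines Ts →
          ∀ x₁ x₂ : EuclideanSpace ℝ (Fin n),
            x₁ ∈ discPts n N C₀ → x₂ ∈ discPts n N C₀ → x₁ ≠ x₂ →
            (({T | T ∈ Ts ∧ x₁ ∈ T.pts ∧ x₂ ∈ T.pts}).ncard : ℝ) ≤
              C * (N : ℝ) ^ ε * dist x₁ x₂ ^ ((1 : ℝ) - (n : ℝ)) := by
  intro ε hε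
  have hC₀pos : (0:ℝ) < C₀ := by linarith
  refine ⟨2 * (34 * C₀) ^ (n - 1), by positivity, ?_⟩
  intro N hN Ts hTs x₁ x₂ hx₁ hx₂ hne
  have hNpos : (0:ℝ) < N := by positivity
  have hN2 : (2:ℝ) ≤ N := by exact_mod_cast hN
  set d := dist x₁ x₂ with hdd
  have hd : 0 < d := dist_pos.mpr hne
  have hdle : d ≤ 2 * C₀ := by
    calc d = ‖x₁ - x₂‖ := dist_eq_norm _ _
      _ ≤ ‖x₁‖ + ‖x₂‖ := norm_sub_le _ _
      _ ≤ C₀ + C₀ := add_le_add hx₁.2 hx₂.2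
      _ = 2 * C₀ := by ring
  set Q := {T | T ∈ Ts ∧ x₁ ∈ T.pts ∧ x₂ ∈ T.pts} with hQ
  set D := DiscLine.dir '' Q with hD
  have hinj : Q.InjOn DiscLine.dir := by
    intro T hT T' hT' heq
    by_contra hne'
    have hsep := hTs T hT.1 T' hT'.1 hne'
    rw [heq, InnerProductGeometry.angle_self (by
      rw [← norm_ne_zero_iff, T'.norm_dir]; norm_num)] at hsep
    have : (0:ℝ) < 1 / N := by positivity
    linarith
  have hcard : (Q.ncard : ℝ) = (D.ncard : ℝ) := by
    rw [hD, Set.ncard_image_of_injOn hinj]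
  have hDunit : ∀ v ∈ D, ‖v‖ = 1 := by
    rintro _ ⟨T, _, rfl⟩; exact T.norm_dir
  set ρ : ℝ := 1 / (2 * N) with hρdef
  have hρpos : 0 < ρ := by positivity
  have hDsep : D.Pairwise fun a b => ρ ≤ dist a b := by
    rintro _ ⟨T, hT, rfl⟩ _ ⟨T', hT', rfl⟩ hneq
    have hTT : T ≠ T' := fun h => hneq (by rw [h])
    have hang := hTs T hT.1 T' hT'.1 hTT
    have hch := chord_lower T.norm_dir T'.norm_dir
      (by positivity : (0:ℝ) ≤ 1 / N)
      (by rw [div_le_one hNpos]; linarith : (1:ℝ) / N ≤ 1) hang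
    rw [dist_eq_norm]
    calc ρ = (1 / N) / 2 := by rw [hρdef]; ring
      _ ≤ ‖T.dir - T'.dir‖ := hch
  -- main estimate: (D.ncard) * d^(n-1) ≤ 2 * (34 C₀)^(n-1)
  have hmain : (D.ncard : ℝ) * d ^ (n - 1) ≤ 2 * (34 * C₀) ^ (n - 1) := by
    rcases le_or_gt d (8 * C₀ / N) with hreg | hreg
    · -- small distance: crude bound by all separated directions in the 1/100-cone
      have hcap : ∀ v ∈ D, ‖v‖ = 1 ∧ ‖v - lastCoordDir n‖ ≤ 1 / 50 := by
        rintro _ ⟨T, _, rfl⟩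
        refine ⟨T.norm_dir, ?_⟩
        have := chord_upper T.norm_dir (lastCoordDir_norm (by omega : 0 < n))
          (by norm_num : (0:ℝ) ≤ 1 / 100) (by norm_num) T.angle_le
        linarith
      obtain ⟨hfin, hcnt⟩ := cap_count hn (lastCoordDir_norm (by omega : 0 < n))
        (by norm_num : (0:ℝ) ≤ 1 / 50) (by norm_num) hρpos hcap hDsep
      have hb1 : 4 * (1 / 50) / ρ + 1 ≤ (N : ℝ) := by
        have h : 4 * (1 / 50) / ρ = 8 * (N:ℝ) / 50 := by
          rw [hρdef]
          field_simp
          ring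
        rw [h]
        linarith
      have hb2 : (D.ncard : ℝ) ≤ (N : ℝ) ^ (n - 1) := by
        calc (D.ncard : ℝ) ≤ (4 * (1 / 50) / ρ + 1) ^ (n - 1) := hcnt
          _ ≤ (N : ℝ) ^ (n - 1) := pow_le_pow_left₀ (by positivity) hb1 _
      calc (D.ncard : ℝ) * d ^ (n - 1)
          ≤ (N : ℝ) ^ (n - 1) * (8 * C₀ / N) ^ (n - 1) := by
            refine mul_le_mul hb2 (pow_le_pow_left₀ hd.le hreg _) (by positivity) (by positivity)
        _ = (8 * C₀) ^ (n - 1) := by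
            rw [← mul_pow]
            congr 1
            field_simp
        _ ≤ 2 * (34 * C₀) ^ (n - 1) := by
            have : (8 * C₀ : ℝ) ^ (n - 1) ≤ (34 * C₀) ^ (n - 1) :=
              pow_le_pow_left₀ (by positivity) (by linarith) _
            linarith [pow_nonneg (by positivity : (0:ℝ) ≤ 34 * C₀) (n - 1)]
    · -- large distance: directions in two caps of radius 4C₀/(Nd) around ±u
      set u := d⁻¹ • (x₂ - x₁) with hu
      have hunorm : ‖u‖ = 1 := by
        rw [hu, norm_smul, Real.norm_eq_abs, abs_inv, abs_of_pos hd, ← dist_eq_norm',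
          ← hdd, inv_mul_cancel₀ hd.ne']
      set δ : ℝ := 4 * C₀ / (N * d) with hδdef
      have hδ0 : 0 ≤ δ := by positivity
      have hδhalf : δ ≤ 1 / 2 := by
        have h8 : 8 * C₀ < d * N := by rwa [div_lt_iff₀ hNpos] at hreg
        rw [hδdef, div_le_div_iff₀ (by positivity) (by norm_num)]
        nlinarith [h8, mul_comm d (N:ℝ)]
      have hsplit : D ⊆ (D ∩ {v | ‖v - u‖ ≤ δ}) ∪ (D ∩ {v | ‖v - (-u)‖ ≤ δ}) := by
        rintro _ ⟨T, hT, rfl⟩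
        have := dir_near hC₀pos (by omega : 0 < N) T hT.2.1.2 hT.2.2.2 hne
        rcases this with h | h
        · left
          exact ⟨⟨T, hT, rfl⟩, h⟩
        · right
          refine ⟨⟨T, hT, rfl⟩, ?_⟩
          show ‖T.dir - (-u)‖ ≤ δ
          rw [sub_neg_eq_add]
          exact h
      have hc1 := cap_count hn hunorm hδ0 hδhalf hρpos
        (S := D ∩ {v | ‖v - u‖ ≤ δ})
        (fun v hv => ⟨hDunit v hv.1, hv.2⟩)
        (hDsep.mono Set.inter_subset_left)
      have hc2 := cap_count hn (by rw [norm_neg]; exact hunorm) hδ0 hδhalf hρpos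
        (S := D ∩ {v | ‖v - (-u)‖ ≤ δ})
        (fun v hv => ⟨hDunit v hv.1, hv.2⟩)
        (hDsep.mono Set.inter_subset_left)
      have hDcard : (D.ncard : ℝ) ≤ (D ∩ {v | ‖v - u‖ ≤ δ}).ncard +
          ((D ∩ {v | ‖v - (-u)‖ ≤ δ}).ncard : ℝ) := by
        have h1 : D.ncard ≤ ((D ∩ {v | ‖v - u‖ ≤ δ}) ∪ (D ∩ {v | ‖v - (-u)‖ ≤ δ})).ncard := by
          exact Set.ncard_le_ncard hsplit (hc1.1.union hc2.1)
        have h2 := Set.ncard_union_le (D ∩ {v | ‖v - u‖ ≤ δ}) (D ∩ {v | ‖v - (-u)‖ ≤ δ})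
        exact_mod_cast h1.trans h2
      have hcapbd : 4 * δ / ρ + 1 ≤ 34 * C₀ / d := by
        have h1 : 4 * δ / ρ = 32 * C₀ / d := by
          rw [hδdef, hρdef]
          field_simp
          ring
        have h2 : (1:ℝ) ≤ 2 * C₀ / d := by
          rw [le_div_iff₀ hd]; linarith
        have h3 : 32 * C₀ / d + 2 * C₀ / d = 34 * C₀ / d := by
          field_simp
          ring
        linarith
      have hbound : ∀ A : Set (EuclideanSpace ℝ (Fin n)),
          (A.ncard : ℝ) ≤ (4 * δ / ρ + 1) ^ (n - 1) → (A.ncard : ℝ) ≤ (34 * C₀ / d) ^ (n - 1) :=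
        fun A hA => hA.trans (pow_le_pow_left₀ (by positivity) hcapbd _)
      calc (D.ncard : ℝ) * d ^ (n - 1)
          ≤ ((34 * C₀ / d) ^ (n - 1) + (34 * C₀ / d) ^ (n - 1)) * d ^ (n - 1) := by
            refine mul_le_mul_of_nonneg_right ?_ (by positivity)
            have := add_le_add (hbound _ hc1.2) (hbound _ hc2.2)
            linarith [hDcard]
        _ = 2 * (34 * C₀) ^ (n - 1) := by
            rw [← two_mul, mul_assoc, ← mul_pow, div_mul_cancel₀ _ hd.ne']
  -- convert to the stated form
  have hrpow : d ^ ((1 : ℝ) - (n : ℝ)) = (d ^ (n - 1))⁻¹ := by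
    rw [← Real.rpow_natCast d (n - 1), ← Real.rpow_neg hd.le]
    congr 1
    have h1 : (1:ℕ) ≤ n := by omega
    push_cast [Nat.cast_sub h1]
    ring
  have hNε : (1:ℝ) ≤ (N:ℝ) ^ ε := by
    rw [show (1:ℝ) = (N:ℝ) ^ (0:ℝ) by rw [Real.rpow_zero]]
    exact Real.rpow_le_rpow_of_exponent_le (by linarith) hε.le
  rw [hrpow, hcard]
  have heq : 2 * (34 * C₀) ^ (n - 1) * (N:ℝ) ^ ε * (d ^ (n - 1))⁻¹ =
      (2 * (34 * C₀) ^ (n - 1) * (N:ℝ) ^ ε) / d ^ (n - 1) := by ring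
  rw [heq, le_div_iff₀ (by positivity : (0:ℝ) < d ^ (n - 1))]
  calc (D.ncard : ℝ) * d ^ (n - 1) ≤ 2 * (34 * C₀) ^ (n - 1) := hmain
    _ ≤ 2 * (34 * C₀) ^ (n - 1) * (N:ℝ) ^ ε :=
        le_mul_of_one_le_right (by positivity) hNε
end
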